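/- Let n ≥ 5 and let P be a pot such that C_min(P) = {W_n} (up to isomorphism). Then in any assembly of W_n from P, each bond-edge type appears on at most two of the n−1 edges of the outer cycle. -/

import Mathlib

/-!
Basic framework for flexible-tile DNA self-assembly.

Bond-edge types are elements of `Fin m`.  A cohesive end is either unhatted
(`Sum.inl a`) or hatted (`Sum.inr a`).  A tile is a finite multiset of cohesive
ends, and a pot is a finite set of tiles.
-/

/-- A tile over the bond-edge alphabet `Fin m`. -/
abbrev Tile (m : ℕ) : Type := Multiset (Fin m ⊕ Fin m)

/-- A pot: a finite set of tiles over the alphabet `Fin m`. -/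
abbrev Pot (m : ℕ) : Type := Finset (Tile m)

/-- A finite multigraph (nonempty finite vertex set, finite edge set; loops and
parallel edges allowed), edges recorded by their unordered pair of endpoints. -/
structure Multigraph where
  V : Type
  E : Type
  [fintypeV : Fintype V]
  [decEqV : DecidableEq V]
  [nonemptyV : Nonempty V]
  [fintypeE : Fintype E]
  ends : E → Sym2 V

attribute [instance] Multigraph.fintypeV Multigraph.decEqV
  Multigraph.nonemptyV Multigraph.fintypeE

/-- The order (number of vertices) of a multigraph. -/
def Multigraph.order (G : Multigraph) : ℕ := Fintype.card G.V

/-- An assembly of `G` from tiles over `Fin m`: each edge gets an orientation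
(an ordered pair of vertices compatible with its endpoints) and a bond-edge type. -/
structure Assembly (m : ℕ) (G : Multigraph) where
  orient : G.E → G.V × G.V
  label : G.E → Fin m
  orient_ends : ∀ e : G.E, G.ends e = s((orient e).1, (orient e).2)

/-- The tile of a vertex `v` under an assembly: one unhatted `a` for each edge
labeled `a` oriented out of `v`, one hatted `a` for each edge labeled `a`
oriented into `v`. -/
def Assembly.tileOf {m : ℕ} {G : Multigraph} (A : Assembly m G) (v : G.V) : Tile m :=
  (Finset.univ : Finset G.E).val.bind fun e =>
    (if (A.orient e).1 = v then {Sum.inl (A.label e)} else 0) +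
    (if (A.orient e).2 = v then {Sum.inr (A.label e)} else 0)

/-- `G` is realized by the pot `P`: there is an assembly of `G` all of whose
vertex tiles belong to `P`. -/
def Realizes {m : ℕ} (P : Pot m) (G : Multigraph) : Prop :=
  ∃ A : Assembly m G, ∀ v : G.V, A.tileOf v ∈ P

/-- `C(P)`: the class of multigraphs realized by `P`. -/
def CSet {m : ℕ} (P : Pot m) : Set Multigraph := {G | Realizes P G}

/-- `m_P`: the minimum order of a multigraph realized by `P`. -/
noncomputable def mP {m : ℕ} (P : Pot m) : ℕ :=
  sInf {n | ∃ G ∈ CSet P, G.order = n}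

/-- `C_min(P)`: the multigraphs realized by `P` of minimum order. -/
def Cmin {m : ℕ} (P : Pot m) : Set Multigraph :=
  {G ∈ CSet P | G.order = mP P}

/-- An isomorphism of multigraphs. -/
structure MultigraphIso (G H : Multigraph) where
  vEquiv : G.V ≃ H.V
  eEquiv : G.E ≃ H.E
  ends_eq : ∀ e : G.E, H.ends (eEquiv e) = (G.ends e).map vEquiv

/-- Two multigraphs are isomorphic. -/
def Isomorphic (G H : Multigraph) : Prop := Nonempty (MultigraphIso G H)

/-- Scenario 1: minimum number of tile types over all pots realizing `G`. -/
noncomputable def T1 (G : Multigraph) : ℕ :=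
  sInf {c | ∃ m : ℕ, ∃ P : Pot m, Realizes P G ∧ P.card = c}

/-- Scenario 1: minimum number of bond-edge types over all pots realizing `G`. -/
noncomputable def B1 (G : Multigraph) : ℕ :=
  sInf {m | ∃ P : Pot m, Realizes P G}

/-- Scenario 2: minimum number of tile types over pots `P` with `G ∈ C(P)` and
`m_P = |V(G)|`. -/
noncomputable def T2 (G : Multigraph) : ℕ :=
  sInf {c | ∃ m : ℕ, ∃ P : Pot m, Realizes P G ∧ mP P = G.order ∧ P.card = c}

/-- Scenario 2: minimum number of bond-edge types over pots `P` with `G ∈ C(P)`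
and `m_P = |V(G)|`. -/
noncomputable def B2 (G : Multigraph) : ℕ :=
  sInf {m | ∃ P : Pot m, Realizes P G ∧ mP P = G.order}

/-- Scenario 3: minimum number of tile types over pots `P` with `C_min(P)`
consisting exactly of the multigraphs isomorphic to `G`. -/
noncomputable def T3 (G : Multigraph) : ℕ :=
  sInf {c | ∃ m : ℕ, ∃ P : Pot m, Cmin P = {H | Isomorphic H G} ∧ P.card = c}

/-- Scenario 3: minimum number of bond-edge types over pots `P` with `C_min(P)`
consisting exactly of the multigraphs isomorphic to `G`. -/
noncomputable def B3 (G : Multigraph) : ℕ :=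
  sInf {m | ∃ P : Pot m, Cmin P = {H | Isomorphic H G}}

/-- The degree of a vertex (a loop contributes 2). -/
def Multigraph.degree (G : Multigraph) (v : G.V) : ℕ :=
  ∑ e : G.E, (if v ∈ G.ends e then (if (G.ends e).IsDiag then 2 else 1) else 0)

/-- `av(G)`: the number of distinct vertex degrees in `G`. -/
def av (G : Multigraph) : ℕ := (Finset.univ.image G.degree).card

/-- `ev(G)`: the number of distinct even vertex degrees in `G`. -/
def ev (G : Multigraph) : ℕ :=
  ((Finset.univ.image G.degree).filter (fun d => Even d)).card

/-- `ov(G)`: the number of distinct odd vertex degrees in `G`. -/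
def ov (G : Multigraph) : ℕ :=
  ((Finset.univ.image G.degree).filter (fun d => Odd d)).card

/-- `z i t`: the net number of cohesive ends of type `i` on tile `t`
(unhatted count minus hatted count). -/
def zval {m : ℕ} (i : Fin m) (t : Tile m) : ℤ :=
  (t.count (Sum.inl i) : ℤ) - (t.count (Sum.inr i) : ℤ)

/-- The wheel graph on `n` vertices: the hub is `none`; the outer-cycle
vertices are `some i` for `i : Fin (n-1)`.  Edge `Sum.inl i` is the spoke from
the hub to `some i`; edge `Sum.inr i` is the outer-cycle edge from `some i` to
`some ((i+1) mod (n-1))`. -/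
def wheel (n : ℕ) : Multigraph where
  V := Option (Fin (n - 1))
  E := Fin (n - 1) ⊕ Fin (n - 1)
  ends e :=
    match e with
    | Sum.inl i => s((none : Option (Fin (n - 1))), some i)
    | Sum.inr i => s(some i,
        some ⟨(i.val + 1) % (n - 1), Nat.mod_lt _ (by have := i.isLt; omega)⟩)

/-- The cycle graph on `n` vertices (vertices `none, some 0, …, some (n-2)`,
edge `k` joining the `k`-th and `(k+1 mod n)`-th vertices in this order). -/
def cycleVtx (n : ℕ) (k : Fin n) : Option (Fin (n - 1)) :=
  if h : k.val = 0 then none else some ⟨k.val - 1, by have := k.isLt; omega⟩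

def cycleGraph (n : ℕ) : Multigraph where
  V := Option (Fin (n - 1))
  E := Fin n
  ends k := s(cycleVtx n k,
    cycleVtx n ⟨(k.val + 1) % n, Nat.mod_lt _ (by have := k.isLt; omega)⟩)

def nxt {N : ℕ} (k : Fin N) : Fin N := ⟨(k.val + 1) % N, Nat.mod_lt _ k.pos⟩

lemma nxt_cases {N : ℕ} (k : Fin N) :
    ((nxt k).val = k.val + 1 ∧ k.val + 1 < N) ∨ ((nxt k).val = 0 ∧ k.val + 1 = N) := by
  rcases lt_or_eq_of_le (Nat.succ_le_of_lt k.isLt) with h | h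
  · exact Or.inl ⟨Nat.mod_eq_of_lt h, h⟩
  · refine Or.inr ⟨?_, h⟩
    have h' : k.val + 1 = N := h
    show (k.val + 1) % N = 0
    rw [h']
    exact Nat.mod_self _

lemma nxt_ne {N : ℕ} (hN : 2 ≤ N) (k : Fin N) : nxt k ≠ k := by
  rcases nxt_cases k with ⟨h, h2⟩ | ⟨h, h2⟩ <;>
    · intro hc
      have := congrArg Fin.val hc
      omega

lemma sum_swap_two {β : Type*} [AddCommMonoid β] {E : Type*} [Fintype E] [DecidableEq E]
    (f g : E → β) (e₁ e₂ : E) (hne : e₁ ≠ e₂)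
    (h12 : f e₁ + f e₂ = g e₁ + g e₂) (hrest : ∀ e, e ≠ e₁ → e ≠ e₂ → f e = g e) :
    ∑ e, f e = ∑ e, g e := by
  have m2 : e₂ ∈ Finset.univ.erase e₁ := Finset.mem_erase.2 ⟨Ne.symm hne, Finset.mem_univ _⟩
  rw [← Finset.add_sum_erase _ f (Finset.mem_univ e₁), ← Finset.add_sum_erase _ f m2,
      ← Finset.add_sum_erase _ g (Finset.mem_univ e₁), ← Finset.add_sum_erase _ g m2]
  rw [Finset.sum_congr rfl (fun e he => hrest e
    (Finset.ne_of_mem_erase (Finset.mem_of_mem_erase he)) (Finset.ne_of_mem_erase he))]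
  rw [← add_assoc, ← add_assoc, h12]


lemma iso_count {G W : Multigraph} (φ : MultigraphIso G W) (v : G.V) :
    (Finset.univ.filter (fun e => v ∈ G.ends e)).card
      = (Finset.univ.filter (fun e => φ.vEquiv v ∈ W.ends e)).card := by
  apply Finset.card_bij (fun e _ => φ.eEquiv e)
  · intro e he
    simp only [Finset.mem_filter, Finset.mem_univ, true_and] at he ⊢
    rw [φ.ends_eq]
    exact Sym2.mem_map.2 ⟨v, he, rfl⟩
  · intro e₁ _ e₂ _ h
    exact φ.eEquiv.injective h
  · intro e' he'
    refine ⟨φ.eEquiv.symm e', ?_, by simp⟩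
    simp only [Finset.mem_filter, Finset.mem_univ, true_and] at he' ⊢
    rw [← Equiv.apply_symm_apply φ.eEquiv e', φ.ends_eq] at he'
    obtain ⟨x, hx, hxe⟩ := Sym2.mem_map.1 he'
    rwa [← φ.vEquiv.injective hxe]

abbrev swapped (n : ℕ) (ends' : Fin (n-1) ⊕ Fin (n-1) → Sym2 (Option (Fin (n-1)))) : Multigraph where
  V := Option (Fin (n-1))
  E := Fin (n-1) ⊕ Fin (n-1)
  ends := ends'

instance wheelMemDec (n : ℕ) (x : Option (Fin (n-1))) (z : Sym2 (wheel n).V) : Decidable (x ∈ z) :=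
  Sym2.Mem.decidable (α := (wheel n).V) x z

instance wheelEqDec (n : ℕ) (x : (wheel n).V) (y : Option (Fin (n-1))) : Decidable (x = y) :=
  (inferInstance : DecidableEq (Option (Fin (n-1)))) x y

example (n : ℕ) (k : Fin (n-1)) : (wheel n).ends (Sum.inr k) = s(some k, some (nxt k)) := rfl
example (n : ℕ) (k : Fin (n-1)) : (wheel n).ends (Sum.inl k) = s(none, some k) := rfl

lemma core (n : ℕ) (hn : 5 ≤ n)
    (ends' : Fin (n-1) ⊕ Fin (n-1) → Sym2 (Option (Fin (n-1))))
    (i j : Fin (n-1)) (hij : i.val < j.val)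
    (hsp : ∀ k, ends' (Sum.inl k) = s((none : Option (Fin (n-1))), some k))
    (hcyc : ∀ k, k ≠ i → k ≠ j → ends' (Sum.inr k) = s(some k, some (nxt k)))
    (hswap : (ends' (Sum.inr i) = s(some i, some (nxt j)) ∧ ends' (Sum.inr j) = s(some j, some (nxt i)))
           ∨ (ends' (Sum.inr i) = s(some j, some (nxt i)) ∧ ends' (Sum.inr j) = s(some i, some (nxt j)))) 
    (hiso : Isomorphic (swapped n ends') (wheel n)) : False := by
  obtain ⟨φ⟩ := hiso
  have hiLt := i.isLt
  have hjLt := j.isLt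
  -- Step 1 : the hub is fixed
  have hhub : φ.vEquiv none = none := by
    rcases hk : φ.vEquiv none with _ | k
    · rfl
    exfalso
    have key := iso_count φ (none : (swapped n ends').V)
    rw [hk] at key
    -- lower bound on the left side
    have h1 : n - 1 ≤ (Finset.univ.filter
        (fun e => (none : (swapped n ends').V) ∈ (swapped n ends').ends e)).card := by
      have hsub : (Finset.univ.map ⟨Sum.inl, Sum.inl_injective⟩ : Finset (Fin (n-1) ⊕ Fin (n-1)))
          ⊆ Finset.univ.filter
            (fun e => (none : (swapped n ends').V) ∈ (swapped n ends').ends e) := by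
        intro e he
        simp only [Finset.mem_map, Finset.mem_univ, true_and,
          Function.Embedding.coeFn_mk] at he
        obtain ⟨k', rfl⟩ := he
        simp only [Finset.mem_filter, Finset.mem_univ, true_and]
        show (none : Option (Fin (n-1))) ∈ ends' (Sum.inl k')
        rw [hsp k']
        simp
      have := Finset.card_le_card hsub
      simpa using this
    -- upper bound on the right side
    have h2 : (Finset.univ.filter
        (fun e => (some k : (wheel n).V) ∈ (wheel n).ends e)).card ≤ 3 := by
      have hprv : (k.val + (n-2)) % (n-1) < n - 1 := Nat.mod_lt _ (by omega)
      letI : DecidableEq (wheel n).E := inferInstanceAs (DecidableEq (Fin (n-1) ⊕ Fin (n-1)))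
      have hsub : Finset.univ.filter (fun e => (some k : (wheel n).V) ∈ (wheel n).ends e)
          ⊆ ({Sum.inl k, Sum.inr k, Sum.inr ⟨(k.val + (n-2)) % (n-1), hprv⟩} :
              Finset (wheel n).E) := by
        intro e he
        simp only [Finset.mem_filter, Finset.mem_univ, true_and] at he
        match e with
        | Sum.inl l =>
          have hm : (some k : Option (Fin (n-1))) = none ∨ (some k : Option (Fin (n-1))) = some l := by
            have : (wheel n).ends (Sum.inl l) = s((none : Option (Fin (n-1))), some l) := rfl
            rw [this] at he
            exact Sym2.mem_iff.1 he
          rcases hm with hm | hm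
          · exact absurd hm (by simp)
          · simp only [Option.some.injEq] at hm
            subst hm
            exact Finset.mem_insert_self _ _
        | Sum.inr l =>
          have hm : (some k : Option (Fin (n-1))) = some l ∨ (some k : Option (Fin (n-1))) = some (nxt l) := by
            have : (wheel n).ends (Sum.inr l) = s(some l, some (nxt l)) := rfl
            rw [this] at he
            exact Sym2.mem_iff.1 he
          simp only [Option.some.injEq] at hm
          rcases hm with hm | hm
          · subst hm; exact Finset.mem_insert_of_mem (Finset.mem_insert_self _ _)
          · have hv : (nxt l).val = k.val := by rw [← hm]
            have : l = (⟨(k.val + (n-2)) % (n-1), hprv⟩ : Fin (n-1)) := by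
              apply Fin.ext
              rcases nxt_cases l with ⟨h1, h2⟩ | ⟨h1, h2⟩
              · have hk1 : k.val + (n-2) = l.val + (n-1) := by omega
                show l.val = (k.val + (n-2)) % (n-1)
                rw [hk1, Nat.add_mod_right, Nat.mod_eq_of_lt l.isLt]
              · have hk1 : k.val + (n-2) = n-2 := by omega
                show l.val = (k.val + (n-2)) % (n-1)
                rw [hk1, Nat.mod_eq_of_lt (by omega)]
                omega
            rw [this]
            exact Finset.mem_insert_of_mem (Finset.mem_insert_of_mem (Finset.mem_singleton_self _))
      refine (Finset.card_le_card hsub).trans ?_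
      refine (Finset.card_insert_le _ _).trans ?_
      have := Finset.card_insert_le (Sum.inr k)
        ({Sum.inr (⟨(k.val + (n-2)) % (n-1), hprv⟩ : Fin (n-1))} : Finset (wheel n).E)
      have h5 : ({Sum.inr (⟨(k.val + (n-2)) % (n-1), hprv⟩ : Fin (n-1))} : Finset (wheel n).E).card = 1 :=
        Finset.card_singleton _
      exact Nat.add_le_add_right (this.trans (Nat.add_le_add_right h5.le 1)) 1
    omega
  -- the coloring
  set c : Fin (n-1) → Bool := fun k => decide (i.val < k.val ∧ k.val ≤ j.val) with hc
  have hci : c i = false := by simp only [hc, decide_eq_false_iff_not]; omega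
  have hcj : c j = true := by simp only [hc, decide_eq_true_eq]; omega
  have hcni : c (nxt i) = true := by
    have hv : (nxt i).val = i.val + 1 := Nat.mod_eq_of_lt (by omega)
    simp only [hc, decide_eq_true_eq]
    omega
  have hcnj : c (nxt j) = false := by
    simp only [hc, decide_eq_false_iff_not]
    rcases nxt_cases j with ⟨hv, h2⟩ | ⟨hv, h2⟩ <;> omega
  -- every outer edge is monochromatic
  have hmono : ∀ l : Fin (n-1), ∃ u w : Fin (n-1),
      ends' (Sum.inr l) = s(some u, some w) ∧ c u = c w := by
    intro l
    by_cases h1 : l = i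
    · rcases hswap with ⟨hs, _⟩ | ⟨hs, _⟩
      · exact ⟨i, nxt j, h1 ▸ hs, by rw [hci, hcnj]⟩
      · exact ⟨j, nxt i, h1 ▸ hs, by rw [hcj, hcni]⟩
    by_cases h2 : l = j
    · rcases hswap with ⟨_, hs⟩ | ⟨_, hs⟩
      · exact ⟨j, nxt i, h2 ▸ hs, by rw [hcj, hcni]⟩
      · exact ⟨i, nxt j, h2 ▸ hs, by rw [hci, hcnj]⟩
    refine ⟨l, nxt l, hcyc l h1 h2, ?_⟩
    have hl1 : l.val ≠ i.val := fun h => h1 (Fin.ext h)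
    have hl2 : l.val ≠ j.val := fun h => h2 (Fin.ext h)
    have hlLt := l.isLt
    simp only [hc]
    apply decide_eq_decide.2
    rcases nxt_cases l with ⟨hv, h3⟩ | ⟨hv, h3⟩ <;> rw [hv] <;> omega
  -- transported coloring on the wheel side
  set d : Fin (n-1) → Bool := fun k => (φ.vEquiv.symm (some k)).elim false c with hd
  have hstep : ∀ k : Fin (n-1), d k = d (nxt k) := by
    intro k
    have he := φ.ends_eq (φ.eEquiv.symm (Sum.inr k))
    erw [Equiv.apply_symm_apply] at he
    have hwr : (wheel n).ends (Sum.inr k) = s(some k, some (nxt k)) := rfl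
    rw [hwr] at he
    rcases hE : φ.eEquiv.symm (Sum.inr k) with l | l
    · rw [hE] at he
      erw [show (swapped n ends').ends (Sum.inl l) = s((none : Option (Fin (n-1))), some l) from hsp l,
        Sym2.map_pair_eq, hhub] at he
      rcases Sym2.eq_iff.1 he with ⟨hx, _⟩ | ⟨_, hx⟩ <;> exact absurd hx (by simp)
    · rw [hE] at he
      obtain ⟨u, w, huw, hcuw⟩ := hmono l
      erw [show (swapped n ends').ends (Sum.inr l) = ends' (Sum.inr l) from rfl, huw,
        Sym2.map_pair_eq] at he
      rcases Sym2.eq_iff.1 he with ⟨hx, hy⟩ | ⟨hx, hy⟩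
      · have hxu : φ.vEquiv.symm (some k) = some u := by rw [hx, Equiv.symm_apply_apply]
        have hyw : φ.vEquiv.symm (some (nxt k)) = some w := by rw [hy, Equiv.symm_apply_apply]
        simp only [hd, hxu, hyw, Option.elim]
        exact hcuw
      · have hxu : φ.vEquiv.symm (some (nxt k)) = some u := by rw [hy, Equiv.symm_apply_apply]
        have hyw : φ.vEquiv.symm (some k) = some w := by rw [hx, Equiv.symm_apply_apply]
        simp only [hd, hxu, hyw, Option.elim]
        exact hcuw.symm
  have hzero : (0:ℕ) < n - 1 := by omega
  have hconst : ∀ t, (ht : t < n-1) → d ⟨t, ht⟩ = d ⟨0, hzero⟩ := by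
    intro t
    induction t with
    | zero => intro ht; rfl
    | succ s ih =>
      intro ht
      have hs : s < n - 1 := by omega
      have hnx : (⟨s+1, ht⟩ : Fin (n-1)) = nxt ⟨s, hs⟩ := by
        apply Fin.ext
        show s + 1 = (s + 1) % (n-1)
        rw [Nat.mod_eq_of_lt ht]
      rw [hnx, ← hstep ⟨s, hs⟩, ih hs]
  have hsome : ∀ k : Fin (n-1), ∃ k', φ.vEquiv (some k) = some k' := by
    intro k
    rcases hh : φ.vEquiv (some k) with _ | k'
    · exfalso
      have := φ.vEquiv.injective (hh.trans hhub.symm)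
      simp at this
    · exact ⟨k', rfl⟩
  obtain ⟨ki, hki⟩ := hsome i
  obtain ⟨kj, hkj⟩ := hsome j
  have dki : d ki = c i := by
    have : φ.vEquiv.symm (some ki) = some i := by erw [← hki, Equiv.symm_apply_apply]
    simp only [hd, this, Option.elim]
  have dkj : d kj = c j := by
    have : φ.vEquiv.symm (some kj) = some j := by erw [← hkj, Equiv.symm_apply_apply]
    simp only [hd, this, Option.elim]
  have e1 : d ki = d ⟨0, hzero⟩ := by
    have := hconst ki.val ki.isLt
    rwa [Fin.eta] at this
  have e2 : d kj = d ⟨0, hzero⟩ := by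
    have := hconst kj.val kj.isLt
    rwa [Fin.eta] at this
  rw [dki, hci] at e1
  rw [dkj, hcj] at e2
  rw [← e2] at e1
  exact Bool.false_ne_true e1


/-- If `C_min(P) = {W_n}` (up to isomorphism) with `n ≥ 5`, then in any assembly
of `W_n` from `P`, each bond-edge type appears on at most two of the `n-1`
outer-cycle edges. -/
theorem wheel_cycle_lemma (n : ℕ) (hn : 5 ≤ n) {m : ℕ} (P : Pot m)
    (hP : Cmin P = {H | Isomorphic H (wheel n)})
    (A : Assembly m (wheel n)) (hA : ∀ v, A.tileOf v ∈ P) (a : Fin m) :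
    (Finset.univ.filter
      (fun i : Fin (n - 1) => A.label (Sum.inr i) = a)).card ≤ 2 := by
  by_contra hcard
  push_neg at hcard
  obtain ⟨p, q, r, hp, hq, hr, hpq, hpr, hqr⟩ := Finset.two_lt_card_iff.1 hcard
  simp only [Finset.mem_filter, Finset.mem_univ, true_and] at hp hq hr
  have hne2 : (2:ℕ) ≤ n - 1 := by omega
  have horient : ∀ k : Fin (n-1),
      A.orient (Sum.inr k) = (some k, some (nxt k)) ∨
      A.orient (Sum.inr k) = (some (nxt k), some k) := by
    intro k
    have h := A.orient_ends (Sum.inr k)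
    have hw : (wheel n).ends (Sum.inr k) = s(some k, some (nxt k)) := rfl
    rw [hw] at h
    rcases Sym2.eq_iff.1 h with ⟨h1, h2⟩ | ⟨h1, h2⟩
    · left; exact Prod.ext h1.symm h2.symm
    · right; exact Prod.ext h2.symm h1.symm
  set dir : Fin (n-1) → Bool := fun k => decide ((A.orient (Sum.inr k)).1 = some k) with hdir
  have hfwd : ∀ k, dir k = true → A.orient (Sum.inr k) = (some k, some (nxt k)) := by
    intro k hk
    rcases horient k with h | h
    · exact h
    · exfalso
      simp only [hdir, decide_eq_true_eq] at hk
      rw [h] at hk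
      exact nxt_ne hne2 k (Option.some_injective _ hk)
  have hbwd : ∀ k, dir k = false → A.orient (Sum.inr k) = (some (nxt k), some k) := by
    intro k hk
    rcases horient k with h | h
    · exfalso
      simp only [hdir, decide_eq_false_iff_not] at hk
      rw [h] at hk
      exact hk rfl
    · exact h
  have main : ∀ i j : Fin (n-1), i.val < j.val → dir i = dir j →
      A.label (Sum.inr i) = a → A.label (Sum.inr j) = a → False := by
    intro i j hij hdd hli hlj
    have hijne : (Sum.inr i : Fin (n-1) ⊕ Fin (n-1)) ≠ Sum.inr j := by
      intro h
      simp only [Sum.inr.injEq] at h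
      rw [h] at hij
      omega
    have hlab : A.label (Sum.inr i) = A.label (Sum.inr j) := by rw [hli, hlj]
    have hijne' : i ≠ j := by
      intro hh
      rw [hh] at hij
      omega
    set orient' : Fin (n-1) ⊕ Fin (n-1) → Option (Fin (n-1)) × Option (Fin (n-1)) := fun e =>
      if e = Sum.inr i then ((A.orient (Sum.inr i)).1, (A.orient (Sum.inr j)).2)
      else if e = Sum.inr j then ((A.orient (Sum.inr j)).1, (A.orient (Sum.inr i)).2)
      else A.orient e with horient'
    set ends' : Fin (n-1) ⊕ Fin (n-1) → Sym2 (Option (Fin (n-1))) :=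
      fun e => s((orient' e).1, (orient' e).2) with hends'
    have hornotij : ∀ e, e ≠ Sum.inr i → e ≠ Sum.inr j → orient' e = A.orient e := by
      intro e h1 h2
      simp only [horient', if_neg h1]
      exact if_neg h2
    have hoi : orient' (Sum.inr i) = ((A.orient (Sum.inr i)).1, (A.orient (Sum.inr j)).2) := by
      simp only [horient', if_pos rfl]
      rfl
    have hoj : orient' (Sum.inr j) = ((A.orient (Sum.inr j)).1, (A.orient (Sum.inr i)).2) := by
      simp [horient', hijne'.symm]
      rfl
    set A' : Assembly m (swapped n ends') := ⟨orient', A.label, fun e => rfl⟩ with hA'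
    have htile : ∀ v : Option (Fin (n-1)), A'.tileOf v = A.tileOf v := by
      intro v
      have lhs : A'.tileOf v = ∑ e : Fin (n-1) ⊕ Fin (n-1),
          ((if (orient' e).1 = v then ({Sum.inl (A.label e)} : Multiset (Fin m ⊕ Fin m)) else 0) +
           (if (orient' e).2 = v then {Sum.inr (A.label e)} else 0)) := rfl
      have rhs : A.tileOf v = ∑ e : Fin (n-1) ⊕ Fin (n-1),
          ((if (A.orient e).1 = v then ({Sum.inl (A.label e)} : Multiset (Fin m ⊕ Fin m)) else 0) +
           (if (A.orient e).2 = v then {Sum.inr (A.label e)} else 0)) := rfl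
      rw [lhs, rhs]
      apply sum_swap_two _ _ (Sum.inr i) (Sum.inr j) hijne
      · simp only [hlab]
        erw [hoi, hoj]
        dsimp only
        exact (by intro a b c d; abel : ∀ a b c d : Tile m, (a + d) + (c + b) = (a + b) + (c + d)) _ _ _ _
      · intro e h1 h2
        rw [hornotij e h1 h2]
        rfl
    have hreal : Realizes P (swapped n ends') := ⟨A', fun v => by rw [htile v]; exact hA v⟩
    have hwmem : wheel n ∈ Cmin P := by
      rw [hP]
      exact ⟨⟨Equiv.refl _, Equiv.refl _, fun e => by simp⟩⟩
    have horderw : (wheel n).order = n := by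
      show Fintype.card (Option (Fin (n-1))) = n
      simp
      omega
    have hmP : mP P = n := by
      have h2 := hwmem.2
      rw [horderw] at h2
      exact h2.symm
    have hmem : swapped n ends' ∈ Cmin P := by
      refine ⟨hreal, ?_⟩
      show Fintype.card (Option (Fin (n-1))) = mP P
      rw [hmP]
      simp
      omega
    rw [hP] at hmem
    have hsp' : ∀ k, ends' (Sum.inl k) = s((none : Option (Fin (n-1))), some k) := by
      intro k
      have ho : orient' (Sum.inl k) = A.orient (Sum.inl k) :=
        hornotij _ (by simp) (by simp)
      show s((orient' (Sum.inl k)).1, (orient' (Sum.inl k)).2) = _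
      rw [ho]
      exact (A.orient_ends (Sum.inl k)).symm
    have hcyc' : ∀ k, k ≠ i → k ≠ j → ends' (Sum.inr k) = s(some k, some (nxt k)) := by
      intro k hk1 hk2
      have ho : orient' (Sum.inr k) = A.orient (Sum.inr k) :=
        hornotij _ (by simp [hk1]) (by simp [hk2])
      show s((orient' (Sum.inr k)).1, (orient' (Sum.inr k)).2) = _
      rw [ho]
      exact (A.orient_ends (Sum.inr k)).symm
    cases hdi : dir i with
    | true =>
      have hfi := hfwd i hdi
      have hfj := hfwd j (by rw [← hdd]; exact hdi)
      refine core n hn ends' i j hij hsp' hcyc' (Or.inl ⟨?_, ?_⟩) hmem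
      · show s((orient' (Sum.inr i)).1, (orient' (Sum.inr i)).2) = _
        simp only [hoi, hfi, hfj]
      · show s((orient' (Sum.inr j)).1, (orient' (Sum.inr j)).2) = _
        simp only [hoj, hfi, hfj]
    | false =>
      have hbi := hbwd i hdi
      have hbj := hbwd j (by rw [← hdd]; exact hdi)
      refine core n hn ends' i j hij hsp' hcyc' (Or.inr ⟨?_, ?_⟩) hmem
      · show s((orient' (Sum.inr i)).1, (orient' (Sum.inr i)).2) = _
        simp only [hoi, hbi, hbj]
        exact Sym2.eq_swap
      · show s((orient' (Sum.inr j)).1, (orient' (Sum.inr j)).2) = _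
        simp only [hoj, hbi, hbj]
        exact Sym2.eq_swap
  have hx : ∃ x y : Fin (n-1), x ≠ y ∧ dir x = dir y ∧
      A.label (Sum.inr x) = a ∧ A.label (Sum.inr y) = a := by
    by_cases h1 : dir p = dir q
    · exact ⟨p, q, hpq, h1, hp, hq⟩
    by_cases h2 : dir p = dir r
    · exact ⟨p, r, hpr, h2, hp, hr⟩
    · refine ⟨q, r, hqr, ?_, hq, hr⟩
      revert h1 h2
      generalize dir p = x; generalize dir q = y; generalize dir r = z
      revert x y z; decide
  obtain ⟨x, y, hxy, hdd, hlx, hly⟩ := hx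
  have hvne : x.val ≠ y.val := fun hh => hxy (Fin.ext hh)
  rcases Nat.lt_or_ge x.val y.val with h | h
  · exact main x y h hdd hlx hly
  · have h' : y.val < x.val := by omega
    exact main y x h' hdd.symm hly hlx
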